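/- For odd n ≥ 3, the cone generated by the extremal states {ω_i : 0 ≤ i < n} is self-dual: its dual cone equals itself. -/

import Mathlib

open Real

noncomputable def rn (n : ℕ) : ℝ := Real.sqrt (1 / Real.cos (π / n))

noncomputable def ωst (n : ℕ) (i : ℤ) : Fin 3 → ℝ :=
  ![rn n * Real.cos (2 * π * (i : ℝ) / n), rn n * Real.sin (2 * π * (i : ℝ) / n), 1]

noncomputable def eEv (n : ℕ) (j : ℤ) : Fin 3 → ℝ :=
  ![rn n * Real.cos ((2 * (j : ℝ) - 1) * π / n) / 2,
    rn n * Real.sin ((2 * (j : ℝ) - 1) * π / n) / 2, 1 / 2]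

noncomputable def eOd (n : ℕ) (j : ℤ) : Fin 3 → ℝ :=
  (1 / (1 + rn n ^ 2)) •
    ![rn n * Real.cos (2 * π * (j : ℝ) / n), rn n * Real.sin (2 * π * (j : ℝ) / n), 1]

noncomputable def ip (v w : Fin 3 → ℝ) : ℝ := v 0 * w 0 + v 1 * w 1 + v 2 * w 2

noncomputable def uE : Fin 3 → ℝ := ![0, 0, 1]

noncomputable def dualCone (C : Set (Fin 3 → ℝ)) : Set (Fin 3 → ℝ) :=
  {f | ∀ v ∈ C, 0 ≤ ip f v}

noncomputable def stateCone (n : ℕ) : Set (Fin 3 → ℝ) :=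
  {v | ∃ c : Fin n → ℝ, (∀ i, 0 ≤ c i) ∧ v = ∑ i, c i • ωst n ((i : ℕ) : ℤ)}

-- trig identities
lemma sd_key1 (A t φ : ℝ) : sin (A + 2*t - φ) * cos A + sin (φ - A) * cos (A + 2*t)
    = sin (2*t) * cos φ := by
  simp only [show A + 2*t - φ = (A + 2*t) - φ by ring, sin_sub, sin_add, cos_add, sin_two_mul,
    cos_two_mul]
  linear_combination (2*Real.cos t*Real.sin t*Real.cos φ) * (sin_sq_add_cos_sq A)

lemma sd_key2 (A t φ : ℝ) : sin (A + 2*t - φ) * sin A + sin (φ - A) * sin (A + 2*t)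
    = sin (2*t) * sin φ := by
  simp only [show A + 2*t - φ = (A + 2*t) - φ by ring, sin_sub, sin_add, cos_add, sin_two_mul,
    cos_two_mul]
  linear_combination (2*Real.cos t*Real.sin t*Real.sin φ) * (sin_sq_add_cos_sq A)

lemma sd_key3 (A t φ : ℝ) : cos t * (sin (A + 2*t - φ) + sin (φ - A))
    = sin (2*t) * cos (φ - A - t) := by
  simp only [show A + 2*t - φ = (A + 2*t) - φ by ring, show φ - A - t = (φ - A) - t by ring,
    sin_sub, sin_add, cos_add, cos_sub, sin_two_mul, cos_two_mul]
  linear_combination (2*Real.cos t*(Real.sin A*Real.cos φ - Real.cos A*Real.sin φ)) *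
    (sin_sq_add_cos_sq t)

-- sums of roots of unity
lemma sd_sum_exp (n : ℕ) (hn : 2 ≤ n) :
    ∑ i ∈ Finset.range n, Complex.exp (((2*π*(i:ℝ)/n : ℝ) : ℂ) * Complex.I) = 0 := by
  have hn0 : (n:ℂ) ≠ 0 := Nat.cast_ne_zero.2 (by omega)
  have h2pi : (2*(π:ℂ)*Complex.I) ≠ 0 := by
    simp [Real.pi_ne_zero, Complex.I_ne_zero, Complex.ofReal_ne_zero]
  have hx : Complex.exp (2*π*Complex.I/n) ≠ 1 := by
    intro h
    rw [Complex.exp_eq_one_iff] at h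
    obtain ⟨k, hk⟩ := h
    have hk' : (2*(π:ℂ)*Complex.I) * 1 = (2*(π:ℂ)*Complex.I) * ((k:ℂ)*n) := by
      field_simp at hk
      linear_combination (2*(π:ℂ)*Complex.I) * hk
    have h1 : ((k*n : ℤ):ℂ) = ((1:ℤ):ℂ) := by
      push_cast
      linear_combination - (mul_left_cancel₀ h2pi hk')
    have h2 : (k*n : ℤ) = 1 := by exact_mod_cast h1
    have : (n:ℤ) ∣ 1 := ⟨k, by linarith [h2]⟩
    have := Int.le_of_dvd one_pos this
    omega
  have hxn : Complex.exp (2*π*Complex.I/n) ^ n = 1 := by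
    rw [← Complex.exp_nat_mul]
    rw [show (n:ℂ) * (2*π*Complex.I/n) = 2*π*Complex.I by field_simp]
    simpa using Complex.exp_int_mul_two_pi_mul_I 1
  calc ∑ i ∈ Finset.range n, Complex.exp (((2*π*(i:ℝ)/n : ℝ) : ℂ) * Complex.I)
      = ∑ i ∈ Finset.range n, Complex.exp (2*π*Complex.I/n) ^ i := by
        refine Finset.sum_congr rfl fun i _ => ?_
        rw [← Complex.exp_nat_mul]
        congr 1
        push_cast
        ring
    _ = 0 := by rw [geom_sum_eq hx, hxn]; simp

lemma sd_sum_cos (n : ℕ) (hn : 2 ≤ n) :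
    ∑ i ∈ Finset.range n, Real.cos (2*π*(i:ℝ)/n) = 0 := by
  have h := congrArg Complex.re (sd_sum_exp n hn)
  simp only [Complex.re_sum, Complex.exp_ofReal_mul_I_re, Complex.zero_re] at h
  exact h

lemma sd_sum_sin (n : ℕ) (hn : 2 ≤ n) :
    ∑ i ∈ Finset.range n, Real.sin (2*π*(i:ℝ)/n) = 0 := by
  have h := congrArg Complex.im (sd_sum_exp n hn)
  simp only [Complex.im_sum, Complex.exp_ofReal_mul_I_im, Complex.zero_im] at h
  exact h

-- cosine lower bound
lemma sd_cos_lb (n : ℕ) (hn : Odd n) (h3 : 3 ≤ n) (k : ℤ) :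
    -Real.cos (π/n) ≤ Real.cos (2*π*(k:ℝ)/n) := by
  have hnR : (0:ℝ) < n := by positivity
  have hper : Real.cos (2*π*(k:ℝ)/n) = Real.cos (2*π*((k % n : ℤ):ℝ)/n) := by
    have harg : 2*π*(k:ℝ)/n = 2*π*((k % n : ℤ):ℝ)/n + (k / n : ℤ) * (2*π) := by
      have h := Int.emod_add_mul_ediv k n
      have hR : ((k % n : ℤ):ℝ) + (n:ℝ)*((k / n : ℤ):ℝ) = (k:ℝ) := by exact_mod_cast h
      field_simp
      linear_combination (-1) * hR
    rw [harg, Real.cos_add_int_mul_two_pi]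
  rw [hper]
  set j : ℤ := k % n with hj
  have hj0 : 0 ≤ j := Int.emod_nonneg k (by positivity)
  have hjn : j < n := Int.emod_lt_of_pos k (by exact_mod_cast hnR)
  have hne : 2*j ≠ (n:ℤ) := by
    intro h
    obtain ⟨m, hm⟩ := hn
    omega
  have hpin : -Real.cos (π/n) = Real.cos (π - π/n) := by rw [Real.cos_pi_sub]
  rw [hpin]
  rcases lt_or_gt_of_ne hne with hlt | hgt
  · have h1 : 2*π*(j:ℝ)/n ≤ π - π/n := by
      rw [div_le_iff₀ hnR, sub_mul, div_mul_cancel₀ _ (ne_of_gt hnR)]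
      have : (2*(j:ℝ)+1) ≤ n := by exact_mod_cast (by omega : 2*j+1 ≤ (n:ℤ))
      nlinarith [Real.pi_pos]
    apply Real.cos_le_cos_of_nonneg_of_le_pi _ _ h1
    · positivity
    · have : π/n > 0 := by positivity
      linarith
  · have hx2 : Real.cos (2*π*(j:ℝ)/n) = Real.cos (2*π - 2*π*(j:ℝ)/n) := by
      rw [Real.cos_two_pi_sub]
    rw [hx2]
    have h1 : 2*π - 2*π*(j:ℝ)/n ≤ π - π/n := by
      have hd : π + π/n ≤ 2*π*(j:ℝ)/n := by
        have h2 : ((n:ℝ)+1) ≤ 2*(j:ℝ) := by exact_mod_cast (by omega : (n:ℤ)+1 ≤ 2*j)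
        calc π + π/n = π*((n:ℝ)+1)/n := by field_simp
          _ ≤ π*(2*(j:ℝ))/n := by gcongr
          _ = 2*π*(j:ℝ)/n := by ring
      linarith
    apply Real.cos_le_cos_of_nonneg_of_le_pi _ _ h1
    · have : 2*π*(j:ℝ)/n ≤ 2*π := by
        rw [div_le_iff₀ hnR]
        have : (j:ℝ) ≤ n - 1 := by exact_mod_cast (by omega : (j:ℤ) ≤ (n:ℤ)-1)
        nlinarith [Real.pi_pos]
      linarith
    · have : π/n > 0 := by positivity
      linarith

theorem ngon_odd_strong_self_duality (n : ℕ) (hn : Odd n) (h3 : 3 ≤ n) :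
    dualCone (stateCone n) = stateCone n := by
  have hpi := Real.pi_pos
  have hnR : (0:ℝ) < n := by positivity
  have hnne : (n:ℝ) ≠ 0 := ne_of_gt hnR
  have hcos : 0 < Real.cos (π/n) := by
    apply Real.cos_pos_of_mem_Ioo
    constructor
    · have : 0 < π/n := by positivity
      linarith
    · have h1 : π/(n:ℝ) ≤ π/3 := by
        apply div_le_div_of_nonneg_left (le_of_lt hpi) (by norm_num)
        exact_mod_cast h3
      nlinarith
  have hr2 : rn n ^ 2 = 1 / Real.cos (π/n) := by
    rw [rn, sq_sqrt (by positivity)]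
  have hr2c : rn n ^ 2 * Real.cos (π/n) = 1 := by
    rw [hr2]; field_simp
  have hrpos : 0 < rn n := Real.sqrt_pos.2 (by positivity)
  -- periodicity of ωst
  have hangle : ∀ k : ℤ, ∃ l : ℤ, 2*π*(k:ℝ)/n = 2*π*((k % n : ℤ):ℝ)/n + l * (2*π) := by
    intro k
    refine ⟨k / n, ?_⟩
    have h := Int.emod_add_mul_ediv k n
    have hR : ((k % n : ℤ):ℝ) + (n:ℝ)*((k / n : ℤ):ℝ) = (k:ℝ) := by exact_mod_cast h
    field_simp
    linear_combination (-1) * hR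
  have hper : ∀ k : ℤ, ωst n k = ωst n (k % n) := by
    intro k
    obtain ⟨l, hl⟩ := hangle k
    unfold ωst
    rw [hl, Real.cos_add_int_mul_two_pi, Real.sin_add_int_mul_two_pi]
  -- each generator is in the cone
  have hmem : ∀ i : Fin n, ωst n ((i:ℕ):ℤ) ∈ stateCone n := by
    intro i
    refine ⟨fun j => if j = i then 1 else 0, fun j => by by_cases h : j = i <;> simp [h], ?_⟩
    simp [ite_smul, Finset.sum_ite_eq']
  -- nonnegativity of pairwise inner products
  have hipom : ∀ i j : ℤ, 0 ≤ ip (ωst n i) (ωst n j) := by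
    intro i j
    have hcc : ip (ωst n i) (ωst n j)
        = rn n ^ 2 * Real.cos (2*π*((i - j : ℤ):ℝ)/n) + 1 := by
      unfold ip ωst
      simp only [Matrix.cons_val_zero, Matrix.cons_val_one, Matrix.head_cons,
        Matrix.cons_val_two, Matrix.tail_cons]
      rw [show 2*π*((i - j : ℤ):ℝ)/n = 2*π*(i:ℝ)/n - 2*π*(j:ℝ)/n by push_cast; ring,
        Real.cos_sub]
      ring
    rw [hcc]
    have hlb := sd_cos_lb n hn h3 (i - j)
    nlinarith [sq_nonneg (rn n)]
  -- sum of all generators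
  have hsumgen : ∑ i : Fin n, ωst n ((i:ℕ):ℤ) = ![0, 0, (n:ℝ)] := by
    have hc' : ∑ i : Fin n, Real.cos (2*π*((i:ℕ):ℝ)/n) = 0 := by
      rw [Fin.sum_univ_eq_sum_range (fun i : ℕ => Real.cos (2*π*(i:ℝ)/n)) n]
      exact sd_sum_cos n (by omega)
    have hs' : ∑ i : Fin n, Real.sin (2*π*((i:ℕ):ℝ)/n) = 0 := by
      rw [Fin.sum_univ_eq_sum_range (fun i : ℕ => Real.sin (2*π*(i:ℝ)/n)) n]
      exact sd_sum_sin n (by omega)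
    funext j
    rw [Finset.sum_apply]
    fin_cases j
    · simp only [ωst, Fin.zero_eta, Fin.isValue, Matrix.cons_val_zero, Int.cast_natCast]
      rw [← Finset.mul_sum, hc']
      simp
    · simp only [ωst, Fin.mk_one, Fin.isValue, Matrix.cons_val_one, Matrix.head_cons,
        Int.cast_natCast, Matrix.cons_val_zero]
      rw [← Finset.mul_sum, hs']
      simp
    · simp only [ωst, Matrix.cons_val_two, Matrix.tail_cons, Matrix.head_cons]
      simp
  ext f
  constructor
  · -- dual ⊆ cone
    intro hf
    have hcon : ∀ k : ℤ, 0 ≤ ip f (ωst n k) := by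
      intro k
      rw [hper k]
      have h1 : 0 ≤ k % (n:ℤ) := Int.emod_nonneg k (by exact_mod_cast hnne)
      have h2 : k % (n:ℤ) < n := Int.emod_lt_of_pos k (by exact_mod_cast hnR)
      have h3' : (k % (n:ℤ)).toNat < n := by omega
      have he : (((⟨(k % (n:ℤ)).toNat, h3'⟩ : Fin n) : ℕ) : ℤ) = k % (n:ℤ) := by
        simp [Int.toNat_of_nonneg h1]
      rw [← he]
      exact hf _ (hmem _)
    obtain ⟨s, φ, hs, hx, hy⟩ :
        ∃ s φ : ℝ, 0 ≤ s ∧ f 0 = s * Real.cos φ ∧ f 1 = s * Real.sin φ := by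
      by_cases h0 : (⟨f 0, f 1⟩ : ℂ) = 0
      · rw [Complex.ext_iff] at h0
        simp only [Complex.zero_re, Complex.zero_im] at h0
        exact ⟨0, 0, le_refl _, by simp [h0.1], by simp [h0.2]⟩
      · have habs : ‖(⟨f 0, f 1⟩ : ℂ)‖ ≠ 0 := norm_ne_zero_iff.mpr h0
        refine ⟨‖(⟨f 0, f 1⟩ : ℂ)‖, Complex.arg ⟨f 0, f 1⟩, norm_nonneg _, ?_, ?_⟩
        · rw [Complex.cos_arg h0]
          field_simp
        · rw [Complex.sin_arg]
          field_simp
    set t := π/(n:ℝ) with ht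
    have h2t : 2*t < π := by
      rw [ht]
      rw [show 2*(π/(n:ℝ)) = 2*π/n by ring, div_lt_iff₀ hnR]
      have h3R : (3:ℝ) ≤ n := by exact_mod_cast h3
      nlinarith
    have h2t0 : 0 < 2*t := by rw [ht]; positivity
    have hsin2t : 0 < Real.sin (2*t) := Real.sin_pos_of_pos_of_lt_pi h2t0 h2t
    set m : ℤ := ⌊φ * n / (2*π)⌋ with hm
    set A := 2*π*(m:ℝ)/n with hA
    have hA1 : A ≤ φ := by
      have h := Int.floor_le (φ * n / (2*π))
      rw [le_div_iff₀ (by positivity)] at h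
      rw [hA, div_le_iff₀ hnR]
      linarith
    have hB1 : φ ≤ A + 2*t := by
      have h := Int.lt_floor_add_one (φ * n / (2*π))
      rw [div_lt_iff₀ (by positivity)] at h
      have hq : A + 2*t = (2*π*(m:ℝ) + 2*π)/n := by
        rw [hA, ht]; field_simp
      rw [hq, le_div_iff₀ hnR]
      push_cast at h
      nlinarith
    set D := rn n * Real.sin (2*t) with hD
    have hDpos : 0 < D := mul_pos hrpos hsin2t
    have hrne : rn n ≠ 0 := ne_of_gt hrpos
    have hs2ne : Real.sin (2*t) ≠ 0 := ne_of_gt hsin2t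
    set a := s * Real.sin (A + 2*t - φ) / D with ha
    set b := s * Real.sin (φ - A) / D with hb
    have ha0 : 0 ≤ a := by
      apply div_nonneg _ (le_of_lt hDpos)
      apply mul_nonneg hs
      apply Real.sin_nonneg_of_nonneg_of_le_pi <;> linarith
    have hb0 : 0 ≤ b := by
      apply div_nonneg _ (le_of_lt hDpos)
      apply mul_nonneg hs
      apply Real.sin_nonneg_of_nonneg_of_le_pi <;> linarith
    have hxab : a * (rn n * Real.cos A) + b * (rn n * Real.cos (A + 2*t)) = f 0 := by
      rw [hx, ha, hb]
      rw [show s * Real.sin (A + 2*t - φ) / D * (rn n * Real.cos A)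
            + s * Real.sin (φ - A) / D * (rn n * Real.cos (A + 2*t))
          = s * rn n * (Real.sin (A+2*t-φ) * Real.cos A
            + Real.sin (φ-A) * Real.cos (A+2*t)) / D by ring, sd_key1, hD]
      field_simp
    have hyab : a * (rn n * Real.sin A) + b * (rn n * Real.sin (A + 2*t)) = f 1 := by
      rw [hy, ha, hb]
      rw [show s * Real.sin (A + 2*t - φ) / D * (rn n * Real.sin A)
            + s * Real.sin (φ - A) / D * (rn n * Real.sin (A + 2*t))
          = s * rn n * (Real.sin (A+2*t-φ) * Real.sin A
            + Real.sin (φ-A) * Real.sin (A+2*t)) / D by ring, sd_key2, hD]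
      field_simp
    have hab : a + b = rn n * s * Real.cos (φ - A - t) := by
      rw [ha, hb, ← add_div, div_eq_iff (ne_of_gt hDpos), hD]
      have h3' := sd_key3 A t φ
      apply mul_right_cancel₀ (ne_of_gt hcos)
      linear_combination s * h3' - (s * Real.cos (φ-A-t) * Real.sin (2*t)) * hr2c
    have habz : a + b ≤ f 2 := by
      obtain ⟨w, hw⟩ := hn
      have hK := hcon (m + ((w:ℤ) + 1))
      have hnw : (n:ℝ) = 2*(w:ℝ)+1 := by exact_mod_cast hw
      have hang : 2*π*((m + ((w:ℤ) + 1) : ℤ):ℝ)/n = A + π + t := by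
        rw [hA, ht]
        push_cast
        field_simp
        linear_combination (-1) * hnw
      have hKexp : ip f (ωst n (m + ((w:ℤ)+1)))
          = f 0 * (rn n * Real.cos (A+π+t)) + f 1 * (rn n * Real.sin (A+π+t)) + f 2 := by
        unfold ip ωst
        simp only [Matrix.cons_val_zero, Matrix.cons_val_one, Matrix.head_cons,
          Matrix.cons_val_two, Matrix.tail_cons]
        rw [hang]
        ring
      rw [hKexp] at hK
      have hid : f 0 * (rn n * Real.cos (A+π+t)) + f 1 * (rn n * Real.sin (A+π+t))
          = -(a+b) := by
        rw [hx, hy, hab]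
        rw [show A+π+t = (A+t)+π by ring, Real.cos_add_pi, Real.sin_add_pi,
          show φ - A - t = φ - (A+t) by ring, Real.cos_sub]
        ring
      linarith
    have h1m : 0 ≤ m % (n:ℤ) := Int.emod_nonneg m (by exact_mod_cast hnne)
    have h2m : m % (n:ℤ) < n := Int.emod_lt_of_pos m (by exact_mod_cast hnR)
    have h1m' : 0 ≤ (m+1) % (n:ℤ) := Int.emod_nonneg (m+1) (by exact_mod_cast hnne)
    have h2m' : (m+1) % (n:ℤ) < n := Int.emod_lt_of_pos (m+1) (by exact_mod_cast hnR)
    set i1 : Fin n := ⟨(m % (n:ℤ)).toNat, by omega⟩ with hi1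
    set i2 : Fin n := ⟨((m+1) % (n:ℤ)).toNat, by omega⟩ with hi2
    have hi12 : i1 ≠ i2 := by
      intro h
      rw [hi1, hi2, Fin.mk.injEq] at h
      have heq : m % (n:ℤ) = (m+1) % (n:ℤ) := by omega
      have h0 := Int.emod_eq_emod_iff_emod_sub_eq_zero.mp heq.symm
      simp only [add_sub_cancel_left] at h0
      have hdvd : (n:ℤ) ∣ 1 := Int.dvd_of_emod_eq_zero h0
      have := Int.le_of_dvd one_pos hdvd
      omega
    have hper1 : ωst n ((i1:ℕ):ℤ) = ωst n m := by
      have he : ((i1:ℕ):ℤ) = m % (n:ℤ) := by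
        rw [hi1]; simp [Int.toNat_of_nonneg h1m]
      rw [he, ← hper]
    have hper2 : ωst n ((i2:ℕ):ℤ) = ωst n (m+1) := by
      have he : ((i2:ℕ):ℤ) = (m+1) % (n:ℤ) := by
        rw [hi2]; simp [Int.toNat_of_nonneg h1m']
      rw [he, ← hper]
    set c0 := (f 2 - a - b)/n with hc0
    have hc00 : 0 ≤ c0 := div_nonneg (by linarith) (le_of_lt hnR)
    refine ⟨fun i => c0 + (if i = i1 then a else 0) + (if i = i2 then b else 0),
      fun i => ?_, ?_⟩
    · show 0 ≤ c0 + (if i = i1 then a else 0) + (if i = i2 then b else 0)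
      split_ifs <;> linarith
    · have hsplit : ∑ i : Fin n,
          (c0 + (if i = i1 then a else 0) + (if i = i2 then b else 0)) • ωst n ((i:ℕ):ℤ)
          = c0 • (∑ i : Fin n, ωst n ((i:ℕ):ℤ))
            + a • ωst n ((i1:ℕ):ℤ) + b • ωst n ((i2:ℕ):ℤ) := by
        rw [Finset.smul_sum]
        simp only [add_smul, ite_smul, zero_smul, Finset.sum_add_distrib,
          Finset.sum_ite_eq', Finset.mem_univ, if_true]
      rw [hsplit, hsumgen, hper1, hper2]
      have hang2 : 2*π*((m+1 : ℤ):ℝ)/n = A + 2*t := by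
        rw [hA, ht]
        push_cast
        field_simp
      funext j
      fin_cases j
      · show f 0 = (c0 • ![0,0,(n:ℝ)] + a • ωst n m + b • ωst n (m+1)) 0
        simp only [Pi.add_apply, Pi.smul_apply, smul_eq_mul, ωst,
          Matrix.cons_val_zero, Matrix.cons_val_one, Matrix.head_cons,
          Matrix.cons_val_two, Matrix.tail_cons]
        rw [hang2]
        rw [show (2:ℝ)*π*(m:ℝ)/n = A from hA.symm]
        linarith [hxab]
      · show f 1 = (c0 • ![0,0,(n:ℝ)] + a • ωst n m + b • ωst n (m+1)) 1
        simp only [Pi.add_apply, Pi.smul_apply, smul_eq_mul, ωst,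
          Matrix.cons_val_zero, Matrix.cons_val_one, Matrix.head_cons,
          Matrix.cons_val_two, Matrix.tail_cons]
        rw [hang2]
        rw [show (2:ℝ)*π*(m:ℝ)/n = A from hA.symm]
        linarith [hyab]
      · show f 2 = (c0 • ![0,0,(n:ℝ)] + a • ωst n m + b • ωst n (m+1)) 2
        simp only [Pi.add_apply, Pi.smul_apply, smul_eq_mul, ωst,
          Matrix.cons_val_zero, Matrix.cons_val_one, Matrix.head_cons,
          Matrix.cons_val_two, Matrix.tail_cons]
        rw [hc0]
        field_simp
        ring
  · -- cone ⊆ dual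
    intro hf v hv
    obtain ⟨c, hc, rfl⟩ := hf
    obtain ⟨d, hd, rfl⟩ := hv
    have hbil : ip (∑ i, c i • ωst n ((i:ℕ):ℤ)) (∑ j, d j • ωst n ((j:ℕ):ℤ))
        = ∑ i, ∑ j, c i * d j * ip (ωst n ((i:ℕ):ℤ)) (ωst n ((j:ℕ):ℤ)) := by
      simp only [ip, Finset.sum_apply, Pi.smul_apply, smul_eq_mul, Finset.sum_mul,
        Finset.mul_sum, ← Finset.sum_add_distrib]
      rw [Finset.sum_comm]
      refine Finset.sum_congr rfl fun i _ => ?_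
      refine Finset.sum_congr rfl fun j _ => by ring
    rw [hbil]
    refine Finset.sum_nonneg fun i _ => Finset.sum_nonneg fun j _ => ?_
    exact mul_nonneg (mul_nonneg (hc i) (hd j)) (hipom _ _)
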